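/- For odd integers C₁, C₂, integers L ≤ U, and indeterminates X, Y with Y²X^{C₂} ≠ 1, the sum ∑_{L ≤ u ≤ U} h(u)·Y^u·X^{(C₁+C₂u)/2}·𝟙₀(C₁+C₂u), where h(u) = 1 - q⁻¹ for L < u < U, h(L) = 1, h(U) = -q⁻¹ (h taken as 0-combined appropriately if L = U), and 𝟙₀(n) = 1 if n is even and 0 if odd, equals (Y^L X^{(C₁+C₂L)/2} + (1-q⁻¹)Y^{L+2}X^{(C₁+C₂(L+2))/2}/(1-Y²X^{C₂}))·𝟙₀(C₁+C₂L) + (1-q⁻¹)Y^{L+1}X^{(C₁+C₂(L+1))/2}/(1-Y²X^{C₂})·𝟙₀(C₁+C₂(L+1)) - ((1-q⁻¹)Y^U X^{(C₁+C₂U)/2}/(1-Y²X^{C₂}) + q⁻¹Y^U X^{(C₁+C₂U)/2})·𝟙₀(C₁+C₂U) - (1-q⁻¹)Y^{U+1}X^{(C₁+C₂(U+1))/2}/(1-Y²X^{C₂})·𝟙₀(C₁+C₂(U+1)). -/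

import Mathlib

/-- Evaluation of a boundary-weighted sum with parity indicator and half-integral
exponents, for odd `C₁`, `C₂`. -/
theorem stmt_7 {K : Type*} [Field K] (X Y qi : K)
    (hX : X ≠ 0) (hY : Y ≠ 0)
    (C₁ C₂ : ℤ) (hC₁ : Odd C₁) (hC₂ : Odd C₂)
    (L U : ℤ) (hLU : L ≤ U)
    (hden : (1 : K) - Y ^ 2 * X ^ C₂ ≠ 0) :
    (∑ u ∈ Finset.Icc L U,
        (if u = L ∧ u = U then 0
         else if u = L then 1
         else if u = U then -qi
         else 1 - qi) * Y ^ u * X ^ ((C₁ + C₂ * u) / 2) *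
          (if Even (C₁ + C₂ * u) then 1 else 0)) =
      (Y ^ L * X ^ ((C₁ + C₂ * L) / 2) +
          (1 - qi) * Y ^ (L + 2) * X ^ ((C₁ + C₂ * (L + 2)) / 2) / (1 - Y ^ 2 * X ^ C₂)) *
        (if Even (C₁ + C₂ * L) then 1 else 0) +
      (1 - qi) * Y ^ (L + 1) * X ^ ((C₁ + C₂ * (L + 1)) / 2) / (1 - Y ^ 2 * X ^ C₂) *
        (if Even (C₁ + C₂ * (L + 1)) then 1 else 0) -
      ((1 - qi) * Y ^ U * X ^ ((C₁ + C₂ * U) / 2) / (1 - Y ^ 2 * X ^ C₂) +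
          qi * Y ^ U * X ^ ((C₁ + C₂ * U) / 2)) *
        (if Even (C₁ + C₂ * U) then 1 else 0) -
      (1 - qi) * Y ^ (U + 1) * X ^ ((C₁ + C₂ * (U + 1)) / 2) / (1 - Y ^ 2 * X ^ C₂) *
        (if Even (C₁ + C₂ * (U + 1)) then 1 else 0) := by
  have hmod : C₂ % 2 = 1 := Int.odd_iff.mp hC₂
  have hpar : ∀ u : ℤ, Even (C₁ + C₂ * (u + 1)) ↔ ¬ Even (C₁ + C₂ * u) := by
    intro u
    have e : C₁ + C₂ * (u + 1) = C₁ + C₂ * u + C₂ := by ring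
    rw [e, Int.even_iff, Int.even_iff]
    generalize C₁ + C₂ * u = m
    omega
  have hX2 : ∀ u : ℤ, Even (C₁ + C₂ * u) →
      X ^ ((C₁ + C₂ * (u + 2)) / 2) = X ^ ((C₁ + C₂ * u) / 2) * X ^ C₂ := by
    intro u hu
    obtain ⟨a, ha⟩ := hu
    rw [← zpow_add₀ hX]
    congr 1
    have e : C₁ + C₂ * (u + 2) = C₁ + C₂ * u + 2 * C₂ := by ring
    rw [e, ha]
    omega
  have hY2 : ∀ u : ℤ, Y ^ (u + 2) = Y ^ u * (Y * Y) := by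
    intro u
    rw [zpow_add₀ hY]
    norm_num
    exact Or.inl (pow_two Y)
  obtain ⟨n, rfl⟩ : ∃ n : ℕ, U = L + n := ⟨(U - L).toNat, by omega⟩
  clear hLU
  induction n with
  | zero =>
    simp only [Nat.cast_zero, add_zero]
    rw [Finset.Icc_self, Finset.sum_singleton]
    simp only [and_self, if_true, zero_mul]
    by_cases h0 : Even (C₁ + C₂ * L)
    · have h1 : ¬ Even (C₁ + C₂ * (L + 1)) := fun h => (hpar L).mp h h0
      rw [if_pos h0, if_neg h1, hX2 L h0, hY2 L]
      field_simp
      ring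
    · have h1 : Even (C₁ + C₂ * (L + 1)) := (hpar L).mpr h0
      rw [if_neg h0, if_pos h1]
      ring
  | succ n ih =>
    rw [show ((n + 1 : ℕ) : ℤ) = (n : ℤ) + 1 from by push_cast; ring, ← add_assoc]
    set V := L + (n : ℤ) with hV
    have hLV : L ≤ V := by omega
    have hins : Finset.Icc L (V + 1) = insert (V + 1) (Finset.Icc L V) := by
      ext x; simp only [Finset.mem_Icc, Finset.mem_insert]; omega
    have hnm : (V + 1) ∉ Finset.Icc L V := by simp
    rw [hins, Finset.sum_insert hnm]
    have hne : V + 1 ≠ L := by omega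
    have hpt : ∀ u ∈ Finset.Icc L V,
        (if u = L ∧ u = V + 1 then 0
         else if u = L then 1
         else if u = V + 1 then -qi
         else 1 - qi) * Y ^ u * X ^ ((C₁ + C₂ * u) / 2) *
          (if Even (C₁ + C₂ * u) then 1 else 0)
        = (if u = L ∧ u = V then 0
           else if u = L then 1
           else if u = V then -qi
           else 1 - qi) * Y ^ u * X ^ ((C₁ + C₂ * u) / 2) *
          (if Even (C₁ + C₂ * u) then 1 else 0)
        + (if u = V then Y ^ u * X ^ ((C₁ + C₂ * u) / 2) *
            (if Even (C₁ + C₂ * u) then 1 else 0) else 0) := by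
      intro u hu
      simp only [Finset.mem_Icc] at hu
      have hu1 : u ≠ V + 1 := by omega
      by_cases h : u = V
      · by_cases hL : u = L
        · simp only [h, hL, hu1]
          simp [← hL, ← h, hu1]
        · simp only [hL, hu1, h]
          simp [hL, ← h, hu1]
          split_ifs <;> ring
      · simp [h, hu1]
    rw [Finset.sum_congr rfl hpt, Finset.sum_add_distrib,
      Finset.sum_ite_eq' (Finset.Icc L V) V, if_pos (Finset.mem_Icc.mpr ⟨hLV, le_refl V⟩), ih]
    have hcoef : (if V + 1 = L ∧ V + 1 = V + 1 then (0:K)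
        else if V + 1 = L then 1
        else if V + 1 = V + 1 then -qi
        else 1 - qi) = -qi := by simp [hne]
    rw [hcoef]
    have e2 : V + 1 + 1 = V + 2 := by ring
    rw [e2]
    by_cases hE : Even (C₁ + C₂ * V)
    · have hE1 : ¬ Even (C₁ + C₂ * (V + 1)) := fun h => (hpar V).mp h hE
      have hE2 : Even (C₁ + C₂ * (V + 2)) := by
        have := (hpar (V + 1)).mpr hE1
        rwa [e2] at this
      rw [if_pos hE, if_neg hE1, if_pos hE2, hX2 V hE, hY2 V]
      field_simp
      ring
    · have hE1 : Even (C₁ + C₂ * (V + 1)) := (hpar V).mpr hE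
      have hE2 : ¬ Even (C₁ + C₂ * (V + 2)) := by
        intro h
        rw [← e2] at h
        exact ((hpar (V + 1)).mp h) hE1
      rw [if_neg hE, if_pos hE1, if_neg hE2]
      field_simp
      ring
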